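/- Let W*(z) = Γ(0, 4πy) e^{4πy} e^{2πiz} for z = x + iy in the upper half plane and let Δ = -y²(∂²/∂x² + ∂²/∂y²) be the hyperbolic Laplacian. Then for n ≥ 1, Δ W*(nz) = -e^{2πinz}. -/

import Mathlib

open Real MeasureTheory Set Complex Topology

/-- The incomplete gamma function `Γ(0,a) = ∫_a^∞ e^{-t} t^{-1} dt`. -/
noncomputable def incGammaZero (a : ℝ) : ℝ := ∫ t in Ioi a, Real.exp (-t) / t

/-- `W*(z) = Γ(0,4πy) e^{4πy} e^{2πiz}` for `z = x+iy`. -/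
noncomputable def Wstar (z : ℂ) : ℂ :=
  (incGammaZero (4 * π * z.im) : ℂ) * Real.exp (4 * π * z.im) * Complex.exp (2 * π * I * z)

/-- The hyperbolic Laplacian `Δ = -y²(∂²/∂x² + ∂²/∂y²)`. -/
noncomputable def hypLap (f : ℂ → ℂ) (z : ℂ) : ℂ :=
  -(z.im : ℂ) ^ 2 * (fderiv ℝ (fun w => fderiv ℝ f w 1) z 1
    + fderiv ℝ (fun w => fderiv ℝ f w I) z I)


lemma phi_contOn {s : Set ℝ} (hs : (0:ℝ) ∉ s) :
    ContinuousOn (fun t => Real.exp (-t) / t) s := by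
  exact (Real.continuous_exp.comp continuous_neg).continuousOn.div continuousOn_id
    (fun t ht => fun h => hs (h ▸ ht))

lemma phi_integrableOn {b : ℝ} (hb : 0 < b) :
    IntegrableOn (fun t => Real.exp (-t) / t) (Ioi b) := by
  have hmeas : Measurable fun t : ℝ => Real.exp (-t) / t :=
    (Real.measurable_exp.comp measurable_neg).div measurable_id
  have hint : IntegrableOn (fun t : ℝ => b⁻¹ * Real.exp (-(1:ℝ) * t)) (Ioi b) :=
    (exp_neg_integrableOn_Ioi b one_pos).const_mul _
  refine hint.mono' hmeas.aestronglyMeasurable ?_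
  filter_upwards [ae_restrict_mem measurableSet_Ioi] with t ht
  have htpos : 0 < t := hb.trans ht
  have habs : ‖Real.exp (-t) / t‖ = Real.exp (-t) / t :=
    Real.norm_of_nonneg (by positivity)
  rw [habs, neg_one_mul, div_eq_mul_inv, mul_comm (b⁻¹)]
  exact mul_le_mul_of_nonneg_left (inv_anti₀ hb ht.le) (Real.exp_pos _).le

lemma incGammaZero_eq {b y : ℝ} (hb : 0 < b) (hy : b ≤ y) :
    incGammaZero y = incGammaZero b - ∫ t in b..y, Real.exp (-t) / t := by
  have hsplit : Ioc b y ∪ Ioi y = Ioi b := Ioc_union_Ioi_eq_Ioi hy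
  have hby : 0 < y := hb.trans_le hy
  unfold incGammaZero
  rw [intervalIntegral.integral_of_le hy, ← hsplit,
    setIntegral_union (Ioc_disjoint_Ioi le_rfl) measurableSet_Ioi
      ((phi_integrableOn hb).mono_set (by rw [← hsplit]; exact subset_union_left))
      (phi_integrableOn hby)]
  ring

lemma hasDerivAt_incGammaZero {a : ℝ} (ha : 0 < a) :
    HasDerivAt incGammaZero (-(Real.exp (-a) / a)) a := by
  set b := a / 2 with hbdef
  have hb : 0 < b := by positivity
  have hba : b < a := by rw [hbdef]; linarith
  have hF : HasDerivAt (fun u => ∫ t in b..u, Real.exp (-t) / t) (Real.exp (-a) / a) a := by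
    refine intervalIntegral.integral_hasDerivAt_right
      (ContinuousOn.intervalIntegrable (phi_contOn ?_)) ?_ ?_
    · intro h0
      have h1 : min b a ≤ (0:ℝ) := h0.1
      have : (0:ℝ) < min b a := lt_min hb ha
      linarith
    · exact ContinuousOn.stronglyMeasurableAtFilter isOpen_Ioi
        (phi_contOn (s := Ioi (0:ℝ)) (by simp)) a ha
    · exact ((phi_contOn (s := Ioi (0:ℝ)) (by simp)).continuousAt (Ioi_mem_nhds ha))
  have heq : ∀ᶠ y in 𝓝 a, incGammaZero y = incGammaZero b - ∫ t in b..y, Real.exp (-t) / t := by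
    filter_upwards [Ioi_mem_nhds hba] with y hy
    exact incGammaZero_eq hb (le_of_lt hy)
  have := ((hasDerivAt_const a (incGammaZero b)).sub hF)
  refine HasDerivAt.congr_of_eventuallyEq ?_ heq
  simpa [Pi.sub_def] using this


/-- Key derivative lemma: fderiv of `w ↦ B(im w) * (d * exp (c w))`. -/
lemma key_hasFDerivAt {B B' : ℝ → ℝ} (c d : ℂ) {z : ℂ} (hB : HasDerivAt B (B' z.im) z.im) :
    ∃ L : ℂ →L[ℝ] ℂ, HasFDerivAt (fun w => (B w.im : ℂ) * (d * Complex.exp (c * w))) L z ∧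
      ∀ v : ℂ, L v = (B' z.im : ℂ) * v.im * (d * Complex.exp (c * z))
        + (B z.im : ℂ) * (d * (c * v * Complex.exp (c * z))) := by
  have h1 : HasFDerivAt (fun w : ℂ => ((B w.im : ℝ) : ℂ))
      (Complex.ofRealCLM.comp ((B' z.im) • Complex.imCLM)) z := by
    have him : HasFDerivAt (fun w : ℂ => w.im) Complex.imCLM z := Complex.imCLM.hasFDerivAt
    have : HasFDerivAt (fun w : ℂ => B w.im) ((B' z.im) • Complex.imCLM) z :=
      hB.comp_hasFDerivAt z him
    exact Complex.ofRealCLM.hasFDerivAt.comp z this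
  have hcw : HasDerivAt (fun w : ℂ => c * w) c z := by
    simpa using (hasDerivAt_id z).const_mul c
  have he : HasDerivAt (fun w : ℂ => Complex.exp (c * w)) (Complex.exp (c * z) * c) z :=
    (Complex.hasDerivAt_exp (c * z)).comp z hcw
  have h2 := ((he.const_mul d).hasFDerivAt).restrictScalars ℝ
  refine ⟨_, h1.mul h2, ?_⟩
  intro v
  simp only [ContinuousLinearMap.add_apply, ContinuousLinearMap.smul_apply,
    ContinuousLinearMap.coe_comp', Function.comp_apply, ContinuousLinearMap.coe_restrictScalars',
    ContinuousLinearMap.one_apply, ContinuousLinearMap.smulRight_apply, Complex.ofRealCLM_apply, Complex.imCLM_apply, smul_eq_mul,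
      ContinuousLinearMap.toSpanSingleton_apply]
  push_cast
  ring

lemma hasDerivAt_B {m y : ℝ} (hm : 0 < m) (hy : 0 < y) :
    HasDerivAt (fun u => incGammaZero (m * u) * Real.exp (m * u))
      (-(y⁻¹) + m * (incGammaZero (m * y) * Real.exp (m * y))) y := by
  have hmul : HasDerivAt (fun u : ℝ => m * u) m y := by
    simpa using (hasDerivAt_id y).const_mul m
  have h1 : HasDerivAt (fun u => incGammaZero (m * u))
      (-(Real.exp (-(m * y)) / (m * y)) * m) y :=
    (hasDerivAt_incGammaZero (mul_pos hm hy)).comp y hmul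
  have h2 : HasDerivAt (fun u => Real.exp (m * u)) (Real.exp (m * y) * m) y :=
    (Real.hasDerivAt_exp (m * y)).comp y hmul
  have := h1.mul h2
  refine this.congr_deriv ?_
  rw [Real.exp_neg]
  field_simp

/-- For `n ≥ 1` and `z` in the upper half plane, `Δ W*(nz) = -e^{2πinz}`. -/
theorem hypLap_Wstar (n : ℕ) (hn : 1 ≤ n) (z : ℂ) (hz : 0 < z.im) :
    hypLap (fun w => Wstar (n * w)) z = -Complex.exp (2 * π * I * n * z) := by
  have hπ := Real.pi_pos
  have hn0 : (0:ℝ) < n := by exact_mod_cast hn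
  set m : ℝ := 4 * π * n with hm_def
  have hm : 0 < m := by positivity
  set c : ℂ := 2 * π * I * n with hc_def
  set B : ℝ → ℝ := fun y => incGammaZero (m * y) * Real.exp (m * y) with hB_def
  set B' : ℝ → ℝ := fun y => -(y⁻¹) + m * B y with hB'_def
  set B'' : ℝ → ℝ := fun y => (y ^ 2)⁻¹ + m * B' y with hB''_def
  have hB : ∀ y : ℝ, 0 < y → HasDerivAt B (B' y) y := fun y hy => hasDerivAt_B hm hy
  have hB' : ∀ y : ℝ, 0 < y → HasDerivAt B' (B'' y) y := by
    intro y hy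
    have h1 : HasDerivAt (fun u : ℝ => -(u⁻¹)) ((y ^ 2)⁻¹) y := by
      simpa using (hasDerivAt_inv hy.ne').fun_neg
    exact h1.fun_add ((hB y hy).const_mul m)
  have hfun : (fun w => Wstar ((n:ℂ) * w))
      = fun w => (B w.im : ℂ) * ((1:ℂ) * Complex.exp (c * w)) := by
    funext w
    simp only [Wstar, hB_def, hc_def, hm_def]
    push_cast
    rw [Complex.mul_im]
    simp only [Complex.natCast_re, Complex.natCast_im]
    push_cast
    ring_nf
  have hU : IsOpen {w : ℂ | 0 < w.im} := isOpen_lt continuous_const Complex.continuous_im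
  have hD1 : ∀ w : ℂ, 0 < w.im →
      fderiv ℝ (fun w => Wstar ((n:ℂ) * w)) w 1 = (B w.im : ℂ) * (c * Complex.exp (c * w)) := by
    intro w hw
    obtain ⟨L, hL, hLv⟩ := key_hasFDerivAt (B' := B') c 1 (hB w.im hw)
    rw [hfun, hL.fderiv, hLv]
    simp
  have hDI : ∀ w : ℂ, 0 < w.im →
      fderiv ℝ (fun w => Wstar ((n:ℂ) * w)) w I
        = (B' w.im : ℂ) * ((1:ℂ) * Complex.exp (c * w))
          + (B w.im : ℂ) * ((c * I) * Complex.exp (c * w)) := by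
    intro w hw
    obtain ⟨L, hL, hLv⟩ := key_hasFDerivAt (B' := B') c 1 (hB w.im hw)
    rw [hfun, hL.fderiv, hLv]
    simp
  have e1 : fderiv ℝ (fun w => fderiv ℝ (fun w => Wstar ((n:ℂ) * w)) w 1) z 1
      = (B z.im : ℂ) * (c * (c * 1 * Complex.exp (c * z))) := by
    have hev : (fun w => fderiv ℝ (fun w => Wstar ((n:ℂ) * w)) w 1)
        =ᶠ[𝓝 z] fun w => (B w.im : ℂ) * (c * Complex.exp (c * w)) := by
      filter_upwards [hU.mem_nhds hz] with w hw using hD1 w hw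
    rw [hev.fderiv_eq]
    obtain ⟨L, hL, hLv⟩ := key_hasFDerivAt (B' := B') c c (hB z.im hz)
    rw [hL.fderiv, hLv]
    simp
  have e2 : fderiv ℝ (fun w => fderiv ℝ (fun w => Wstar ((n:ℂ) * w)) w I) z I
      = ((B'' z.im : ℂ) * ((1:ℂ) * Complex.exp (c * z))
          + (B' z.im : ℂ) * (1 * (c * I * Complex.exp (c * z))))
        + ((B' z.im : ℂ) * ((c * I) * Complex.exp (c * z))
          + (B z.im : ℂ) * ((c * I) * (c * I * Complex.exp (c * z)))) := by
    have hev : (fun w => fderiv ℝ (fun w => Wstar ((n:ℂ) * w)) w I)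
        =ᶠ[𝓝 z] fun w => (B' w.im : ℂ) * ((1:ℂ) * Complex.exp (c * w))
          + (B w.im : ℂ) * ((c * I) * Complex.exp (c * w)) := by
      filter_upwards [hU.mem_nhds hz] with w hw using hDI w hw
    rw [hev.fderiv_eq]
    obtain ⟨L1, hL1, hL1v⟩ := key_hasFDerivAt (B' := B'') c 1 (hB' z.im hz)
    obtain ⟨L2, hL2, hL2v⟩ := key_hasFDerivAt (B' := B') c (c * I) (hB z.im hz)
    rw [(hL1.fun_add hL2).fderiv]
    simp only [ContinuousLinearMap.add_apply, hL1v, hL2v, Complex.I_im]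
    push_cast
    ring
  show -(z.im : ℂ) ^ 2 * (fderiv ℝ (fun w => fderiv ℝ (fun w => Wstar ((n:ℂ) * w)) w 1) z 1
    + fderiv ℝ (fun w => fderiv ℝ (fun w => Wstar ((n:ℂ) * w)) w I) z I)
    = -Complex.exp (2 * π * I * n * z)
  rw [e1, e2]
  have hcz : (2 : ℂ) * π * I * n * z = c * z := by rw [hc_def]
  have hcI : c * I = -((m : ℂ) / 2) := by
    rw [hc_def, hm_def]
    push_cast
    have : Complex.I * Complex.I = -1 := Complex.I_mul_I
    linear_combination (2 * (π:ℂ) * n) * this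
  have hyne : (z.im : ℂ) ≠ 0 := by exact_mod_cast hz.ne'
  have hcc : c * (c * (1:ℂ) * Complex.exp (c * z))
      = -((m : ℂ) ^ 2 / 4) * Complex.exp (c * z) := by
    have hc2 : c * c = -((m : ℂ) ^ 2 / 4) := by
      rw [hc_def, hm_def]
      push_cast
      linear_combination (4 * (π:ℂ) ^ 2 * (n:ℂ) ^ 2) * Complex.I_mul_I
    linear_combination Complex.exp (c * z) * hc2
  rw [hcz, hB''_def, hcI, hcc]
  push_cast
  have hy2 : ((z.im : ℂ)) ≠ 0 := by exact_mod_cast hz.ne'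
  have hinv : (z.im : ℂ) ^ 2 * ((z.im : ℂ) ^ 2)⁻¹ = 1 := mul_inv_cancel₀ (pow_ne_zero 2 hy2)
  linear_combination (-(Complex.exp (c * z))) * hinv
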